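/- (Oort–Peters intersection Q1·Q2 = P + 3P1.) The set of common zeros of Q1 and Q2 in ℙ²(ℂ) is exactly {P, P1}. Moreover, at P1 the gradient vectors ∇Q1(1,0,1) and ∇Q2(1,0,1) are both nonzero and proportional (the two conics are tangent at P1), while at P the gradients ∇Q1(3,0,2) and ∇Q2(3,0,2) are not proportional (the conics meet transversally at P). -/
import Mathlib


noncomputable section

open MvPolynomial

/-- The polynomial ring `ℂ[x,y,z]`. -/
abbrev R3 : Type := MvPolynomial (Fin 3) ℂ

def x : R3 := X 0
def y : R3 := X 1
def z : R3 := X 2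

/-- The Oort–Peters conic `Q1 = y² + 2x² − 2xy − 5xz + 2yz + 3z²`. -/
def Q1 : R3 := y^2 + 2*x^2 - 2*x*y - 5*x*z + 2*y*z + 3*z^2
/-- The Oort–Peters conic `Q2 = y² + 2x² + 2xy − 5xz − 2yz + 3z²`. -/
def Q2 : R3 := y^2 + 2*x^2 + 2*x*y - 5*x*z - 2*y*z + 3*z^2
/-- The Oort–Peters cubic `C1 = y²z + x³ − 4x²z + 3xz²`. -/
def C1 : R3 := y^2*z + x^3 - 4*x^2*z + 3*x*z^2
/-- The Oort–Peters cubic `C2 = 2y²z − xy² + 4x²z − 12xz² + 9z³`. -/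
def C2 : R3 := 2*y^2*z - x*y^2 + 4*x^2*z - 12*x*z^2 + 9*z^3

/-- `i√3`. -/
def s3 : ℂ := Complex.I * Real.sqrt 3

/-- Coordinate representative of `P = [3:0:2]` (i.e. `[3/2:0:1]`). -/
def P : Fin 3 → ℂ := ![3, 0, 2]
/-- Coordinate representative of `P1 = [1:0:1]`. -/
def P1 : Fin 3 → ℂ := ![1, 0, 1]
/-- Coordinate representative of `P2 = [3+i√3 : 3+i√3 : 2]`. -/
def P2 : Fin 3 → ℂ := ![3+s3, 3+s3, 2]
/-- Coordinate representative of `P3 = [3−i√3 : 3−i√3 : 2]`. -/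
def P3 : Fin 3 → ℂ := ![3-s3, 3-s3, 2]
/-- Coordinate representative of `P4 = [3+i√3 : −3−i√3 : 2]`. -/
def P4 : Fin 3 → ℂ := ![3+s3, -3-s3, 2]
/-- Coordinate representative of `P5 = [3−i√3 : −3+i√3 : 2]`. -/
def P5 : Fin 3 → ℂ := ![3-s3, -3+s3, 2]
/-- Coordinate representative of `∞ = [0:1:0]`. -/
def Pinf : Fin 3 → ℂ := ![0, 1, 0]

/-- The gradient vector of `G` at the point `v ∈ ℂ³`. -/
def grad (G : R3) (v : Fin 3 → ℂ) : Fin 3 → ℂ := fun i => eval v (pderiv i G)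

/-- The common zero locus of `G` and `H` in `ℙ²(ℂ)` is exactly the set of points with
coordinate representatives in the list `reps`. -/
def CommonZerosExactly (G H : R3) (reps : List (Fin 3 → ℂ)) : Prop :=
  (∀ w ∈ reps, eval w G = 0 ∧ eval w H = 0) ∧
  ∀ v : Fin 3 → ℂ, v ≠ 0 → eval v G = 0 → eval v H = 0 →
    ∃ t : ℂ, t ≠ 0 ∧ ∃ w ∈ reps, v = t • w

/-- The curves `{G = 0}` and `{H = 0}` are tangent at the point with representative
`v`: both gradients are nonzero and they are proportional. -/
def TangentAt (G H : R3) (v : Fin 3 → ℂ) : Prop :=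
  grad G v ≠ 0 ∧ grad H v ≠ 0 ∧ ∃ t : ℂ, t ≠ 0 ∧ grad H v = t • grad G v


lemma pderiv_ofNat' (i : Fin 3) (n : ℕ) [n.AtLeastTwo] :
    pderiv i (no_index (OfNat.ofNat n) : R3) = 0 := by
  rw [← map_ofNat (C : ℂ →+* R3) n]; exact pderiv_C

lemma eval_Q1 (v : Fin 3 → ℂ) :
    eval v Q1 = v 1 ^ 2 + 2 * v 0 ^ 2 - 2 * v 0 * v 1 - 5 * v 0 * v 2 + 2 * v 1 * v 2
      + 3 * v 2 ^ 2 := by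
  simp [Q1, x, y, z]

lemma eval_Q2 (v : Fin 3 → ℂ) :
    eval v Q2 = v 1 ^ 2 + 2 * v 0 ^ 2 + 2 * v 0 * v 1 - 5 * v 0 * v 2 - 2 * v 1 * v 2
      + 3 * v 2 ^ 2 := by
  simp [Q2, x, y, z]

lemma grad_Q1 (v : Fin 3 → ℂ) :
    grad Q1 v = ![4 * v 0 - 2 * v 1 - 5 * v 2, 2 * v 1 - 2 * v 0 + 2 * v 2,
      -5 * v 0 + 2 * v 1 + 6 * v 2] := by
  funext i
  fin_cases i <;>
    · simp [grad, Q1, x, y, z, pderiv_X, pderiv_ofNat']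
      ring

lemma grad_Q2 (v : Fin 3 → ℂ) :
    grad Q2 v = ![4 * v 0 + 2 * v 1 - 5 * v 2, 2 * v 1 + 2 * v 0 - 2 * v 2,
      -5 * v 0 - 2 * v 1 + 6 * v 2] := by
  funext i
  fin_cases i <;>
    · simp [grad, Q2, x, y, z, pderiv_X, pderiv_ofNat']
      ring

/-- `Q1·Q2 = P + 3P1`: the conics meet exactly at `P` and `P1`; they are
tangent at `P1` and transversal at `P`. -/
theorem OP_conics_intersection :
    CommonZerosExactly Q1 Q2 [P, P1] ∧
    TangentAt Q1 Q2 P1 ∧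
    LinearIndependent ℂ ![grad Q1 P, grad Q2 P] := by
  refine ⟨⟨?_, ?_⟩, ⟨?_, ?_, 1, one_ne_zero, ?_⟩, ?_⟩
  · intro w hw
    simp only [List.mem_cons, List.not_mem_nil, or_false] at hw
    rcases hw with rfl | rfl <;>
      constructor <;> simp [eval_Q1, eval_Q2, P, P1] <;> ring
  · intro v hv h1 h2
    rw [eval_Q1] at h1
    rw [eval_Q2] at h2
    set a := v 0 with ha
    set b := v 1 with hb
    set c := v 2 with hc
    have hsub : b * (a - c) = 0 := by linear_combination (h2 - h1) / 4
    have hcase : b = 0 ∧ (2 * a - 3 * c) * (a - c) = 0 := by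
      rcases mul_eq_zero.mp hsub with hb0 | hac
      · exact ⟨hb0, by linear_combination h1 + (2*a - 2*c - b) * hb0⟩
      · have hac' : a = c := by linear_combination hac
        have hb2 : b ^ 2 = 0 := by linear_combination h1 - (2*a - 3*c - 2*b) * hac
        have hb0 : b = 0 := by
          have := sq_eq_zero_iff.mp hb2; exact this
        exact ⟨hb0, by rw [hac']; ring⟩
    obtain ⟨hb0, hfac⟩ := hcase
    rcases mul_eq_zero.mp hfac with h23 | hac
    · -- 2a = 3c : point P, v = (c/2) • P
      have hcne : c ≠ 0 := by
        intro hc0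
        apply hv
        funext i
        fin_cases i
        · show a = 0; linear_combination (h23 + 3 * hc0) / 2
        · exact hb0
        · exact hc0
      refine ⟨c / 2, div_ne_zero hcne two_ne_zero, P, by simp, ?_⟩
      funext i
      fin_cases i
      · show a = c / 2 * P 0
        simp [P]; linear_combination h23 / 2
      · show b = c / 2 * P 1
        simp [P, hb0]
      · show c = c / 2 * P 2
        simp [P]
    · -- a = c : point P1, v = a • P1
      have hane : a ≠ 0 := by
        intro ha0
        apply hv
        funext i
        fin_cases i
        · exact ha0
        · exact hb0
        · show c = 0; linear_combination ha0 - hac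
      refine ⟨a, hane, P1, by simp, ?_⟩
      funext i
      fin_cases i
      · show a = a * P1 0; simp [P1]
      · show b = a * P1 1; simp [P1, hb0]
      · show c = a * P1 2; simp [P1]; linear_combination -hac
  · intro h
    have := congrFun h 2
    rw [grad_Q1] at this
    simp [P1] at this
    norm_num at this
  · intro h
    have := congrFun h 2
    rw [grad_Q2] at this
    simp [P1] at this
    norm_num at this
  · rw [grad_Q1, grad_Q2]
    simp [P1]
  · rw [LinearIndependent.pair_iff]
    intro s t hst
    rw [grad_Q1, grad_Q2] at hst
    have h0 := congrFun hst 0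
    have h1 := congrFun hst 1
    simp [P] at h0 h1
    norm_num at h0 h1
    constructor
    · linear_combination (h0 - h1) / 4
    · linear_combination (h0 + h1) / 4
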